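/- Let n ≥ 2, and for each pair i < j in [n] let q(i,j) ∈ [1/2 − δ, 1/2 + δ] with δ ≤ 1/(2·C(n,2)²). Then there exist probability distributions q_1,...,q_n on a finite totally ordered set such that for all i < j, if α ∼ q_i and β ∼ q_j independently, then P(α > β) = q(i,j) exactly. -/

import Mathlib

open Finset

namespace PWR

lemma two_mul_choose_two (n : ℕ) : 2 * n.choose 2 = n * (n - 1) := by
  induction n with
  | zero => rfl
  | succ k ih =>
    rw [Nat.choose_succ_succ, Nat.choose_one_right, Nat.mul_add, ih]
    cases k with
    | zero => rfl
    | succ l => rw [Nat.succ_sub_one, Nat.succ_sub_one]; ring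

lemma choose_succ_two (b : ℕ) : (b + 1).choose 2 = b.choose 2 + b := by
  rw [Nat.choose_succ_succ, Nat.choose_one_right, Nat.add_comm]

section

variable (n : ℕ) (q : Fin n → Fin n → ℝ)

def pairs : Finset (Fin n × Fin n) := Finset.univ.filter fun p => p.1 < p.2

lemma mem_pairs {n : ℕ} {p : Fin n × Fin n} : p ∈ pairs n ↔ p.1 < p.2 := by
  simp [pairs]

def secIdx {n : ℕ} (p : Fin n × Fin n) : ℕ := Nat.choose p.2.val 2 + p.1.val

lemma secIdx_lt {n : ℕ} {p : Fin n × Fin n} (hp : p ∈ pairs n) :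
    secIdx p < n.choose 2 := by
  have h : p.1 < p.2 := mem_pairs.1 hp
  have h1 : p.1.val < p.2.val := h
  have h2 : secIdx p < (p.2.val + 1).choose 2 := by
    rw [choose_succ_two]; unfold secIdx; omega
  exact lt_of_lt_of_le h2 (Nat.choose_le_choose 2 p.2.isLt)

lemma secIdx_inj {n : ℕ} {p p' : Fin n × Fin n} (hp : p ∈ pairs n) (hp' : p' ∈ pairs n)
    (h : secIdx p = secIdx p') : p = p' := by
  have h1 : p.1.val < p.2.val := mem_pairs.1 hp
  have h1' : p'.1.val < p'.2.val := mem_pairs.1 hp'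
  have key : ∀ (r s : Fin n × Fin n), r.1.val < r.2.val → r.2.val < s.2.val →
      secIdx r < secIdx s := by
    intro r s hr hlt
    have a1 : secIdx r < (r.2.val + 1).choose 2 := by
      rw [choose_succ_two]; unfold secIdx; omega
    have a2 : (r.2.val + 1).choose 2 ≤ (s.2.val).choose 2 :=
      Nat.choose_le_choose 2 hlt
    unfold secIdx; unfold secIdx at a1; omega
  have hbb : p.2.val = p'.2.val := by
    rcases lt_trichotomy p.2.val p'.2.val with hc | hc | hc
    · exact absurd h (Nat.ne_of_lt (key p p' h1 hc))
    · exact hc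
    · exact absurd h.symm (Nat.ne_of_lt (key p' p h1' hc))
  have hb : p.2 = p'.2 := Fin.ext hbb
  have ha : p.1 = p'.1 := by
    apply Fin.ext
    unfold secIdx at h
    rw [hbb] at h
    omega
  exact Prod.ext ha hb

def off (p : Fin n × Fin n) (t : Bool) (i : Fin n) : ℕ :=
  if i = p.1 then (if t then n + 3 else n)
  else if i = p.2 then (if t then n + 2 else n + 1)
  else (if t then 2 * n + 3 - i.val else i.val)

lemma off_lt {n : ℕ} (p : Fin n × Fin n) (t : Bool) (i : Fin n) :
    off n p t i < 2 * n + 4 := by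
  have := i.isLt
  unfold off
  split_ifs <;> omega

def pos (p : Fin n × Fin n) (t : Bool) (i : Fin n) : ℕ :=
  secIdx p * (2 * n + 4) + off n p t i

lemma pos_lt {n : ℕ} (hn : 2 ≤ n) {p : Fin n × Fin n} (hp : p ∈ pairs n)
    (t : Bool) (i : Fin n) : pos n p t i < 2 * n ^ 3 + 1 := by
  have h1 : secIdx p < n.choose 2 := secIdx_lt hp
  have h2 : off n p t i < 2 * n + 4 := off_lt p t i
  have h3 : pos n p t i < (secIdx p + 1) * (2 * n + 4) := by
    unfold pos; rw [Nat.add_mul, Nat.one_mul]; omega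
  have h4 : (secIdx p + 1) * (2 * n + 4) ≤ n.choose 2 * (2 * n + 4) :=
    Nat.mul_le_mul_right _ h1
  have h5 : n.choose 2 * (2 * n + 4) = (2 * n.choose 2) * (n + 2) := by ring
  have h6 : 2 * n.choose 2 = n * (n - 1) := two_mul_choose_two n
  obtain ⟨k, rfl⟩ : ∃ k, n = k + 2 := ⟨n - 2, by omega⟩
  have h7 : (k + 2) - 1 = k + 1 := rfl
  have h8 : (k+2) * (k+1) * ((k+2)+2) ≤ 2 * (k+2)^3 + 1 := by
    calc (k+2) * (k+1) * ((k+2)+2) ≤ (k+2) * (k+2) * (2*(k+2)) :=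
          Nat.mul_le_mul (Nat.mul_le_mul_left _ (by omega)) (by omega)
      _ = 2 * (k+2)^3 := by ring
      _ ≤ 2 * (k+2)^3 + 1 := Nat.le_succ _
  calc pos (k+2) p t i < (secIdx p + 1) * (2 * (k+2) + 4) := h3
    _ ≤ (k+2).choose 2 * (2 * (k+2) + 4) := h4
    _ = (2 * (k+2).choose 2) * ((k+2) + 2) := h5
    _ = (k+2) * (k+1) * ((k+2)+2) := by rw [h6, h7]
    _ ≤ 2 * (k+2)^3 + 1 := h8

noncomputable def X (a b : Fin n) : ℝ :=
  1 / (2 * (n.choose 2 : ℝ)) - (n.choose 2 : ℝ) * (q a b - 1 / 2)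

noncomputable def w (p : Fin n × Fin n) (t : Bool) (i : Fin n) : ℝ :=
  if i = p.1 then (if t then 1 / (n.choose 2 : ℝ) - X n q p.1 p.2 else X n q p.1 p.2)
  else 1 / (2 * (n.choose 2 : ℝ))

noncomputable def d (i : Fin n) (x : ℕ) : ℝ :=
  ∑ e ∈ pairs n ×ˢ (Finset.univ : Finset Bool),
    w n q e.1 e.2 i * (if x = pos n e.1 e.2 i then 1 else 0)

end

section main

variable {n : ℕ} {q : Fin n → Fin n → ℝ}

lemma M_pos (hn : 2 ≤ n) : (0 : ℝ) < (n.choose 2 : ℝ) := by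
  have : 0 < n.choose 2 := Nat.choose_pos hn
  exact_mod_cast this

lemma X_mem (hn : 2 ≤ n) (hq : ∀ i j : Fin n, i < j →
      |q i j - 1 / 2| ≤ 1 / (2 * ((n.choose 2 : ℝ)) ^ 2)) {a b : Fin n} (hab : a < b) :
    0 ≤ X n q a b ∧ X n q a b ≤ 1 / (n.choose 2 : ℝ) := by
  have hM := M_pos (n := n) hn
  have hMne : ((n.choose 2 : ℕ) : ℝ) ≠ 0 := ne_of_gt hM
  have h2 := abs_le.1 (hq a b hab)
  have hb1 : (n.choose 2:ℝ) * (q a b - 1/2) ≤ (n.choose 2:ℝ) * (1/(2*((n.choose 2:ℝ))^2)) :=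
    mul_le_mul_of_nonneg_left h2.2 hM.le
  have hb2 : (n.choose 2:ℝ) * (-(1/(2*((n.choose 2:ℝ))^2))) ≤ (n.choose 2:ℝ) * (q a b - 1/2) :=
    mul_le_mul_of_nonneg_left (by linarith [h2.1]) hM.le
  have he : (n.choose 2:ℝ) * (1/(2*((n.choose 2:ℝ))^2)) = 1/(2*(n.choose 2:ℝ)) := by
    field_simp
  have he2 : (n.choose 2:ℝ) * (-(1/(2*((n.choose 2:ℝ))^2))) = -(1/(2*(n.choose 2:ℝ))) := by
    rw [mul_neg, he]
  have h1M : 1/((n.choose 2:ℝ)) = 1/(2*(n.choose 2:ℝ)) + 1/(2*(n.choose 2:ℝ)) := by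
    field_simp
    ring
  rw [he] at hb1
  rw [he2] at hb2
  unfold X
  constructor
  · linarith
  · linarith

lemma w_nonneg (hn : 2 ≤ n) (hq : ∀ i j : Fin n, i < j →
      |q i j - 1 / 2| ≤ 1 / (2 * ((n.choose 2 : ℝ)) ^ 2)) {p : Fin n × Fin n} (hp : p ∈ pairs n) (t : Bool) (i : Fin n) :
    0 ≤ w n q p t i := by
  have hM := M_pos (n := n) hn
  obtain ⟨hX0, hX1⟩ := X_mem hn hq (mem_pairs.1 hp)
  unfold w
  split_ifs with h1 h2
  · linarith
  · linarith
  · positivity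

lemma d_nonneg (hn : 2 ≤ n) (hq : ∀ i j : Fin n, i < j →
      |q i j - 1 / 2| ≤ 1 / (2 * ((n.choose 2 : ℝ)) ^ 2)) (i : Fin n) (x : ℕ) : 0 ≤ d n q i x := by
  unfold d
  apply Finset.sum_nonneg
  intro e he
  have hp : e.1 ∈ pairs n := (Finset.mem_product.1 he).1
  have := w_nonneg hn hq hp e.2 i
  split_ifs <;> simp <;> linarith

lemma d_support (hn : 2 ≤ n) (i : Fin n) (x : ℕ) (hx : x ∉ Finset.range (2 * n ^ 3 + 1)) :
    d n q i x = 0 := by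
  unfold d
  apply Finset.sum_eq_zero
  intro e he
  have hp : e.1 ∈ pairs n := (Finset.mem_product.1 he).1
  have hpos := pos_lt hn hp e.2 i
  have hxge : 2 * n ^ 3 + 1 ≤ x := by
    by_contra hcon
    exact hx (Finset.mem_range.2 (by omega))
  rw [if_neg (by omega), mul_zero]

lemma card_pairs : (pairs n).card = n.choose 2 := by
  classical
  rw [pairs, Finset.card_filter, ← Finset.univ_product_univ, Finset.sum_product_right]
  have h2 : ∀ b : Fin n, (∑ a : Fin n, if (a, b).1 < (a, b).2 then 1 else 0) = (b : ℕ) := by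
    intro b
    have e1 : (∑ a : Fin n, if (a, b).1 < (a, b).2 then 1 else 0)
        = (Finset.univ.filter fun a : Fin n => a < b).card := (Finset.card_filter _ _).symm
    have e2 : (Finset.univ.filter fun a : Fin n => a < b) = Finset.Iio b := by
      ext a; simp
    rw [e1, e2, Fin.card_Iio]
  rw [Finset.sum_congr rfl (fun b _ => h2 b), Fin.sum_univ_eq_sum_range (fun i => i) n,
    Finset.sum_range_id, Nat.choose_two_right]

lemma sum_w_bool (hn : 2 ≤ n) (p : Fin n × Fin n) (i : Fin n) :
    w n q p true i + w n q p false i = 1 / (n.choose 2 : ℝ) := by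
  have hM := M_pos (n := n) hn
  have hMne : ((n.choose 2 : ℕ) : ℝ) ≠ 0 := ne_of_gt hM
  by_cases h1 : i = p.1
  · simp only [w, if_pos h1, Bool.false_eq_true, if_true, if_false]
    ring
  · simp only [w, if_neg h1]
    rw [← add_div]
    rw [show (1:ℝ) + 1 = 2 by norm_num]
    rw [mul_comm, div_mul_eq_div_div, div_right_comm]
    norm_num

lemma d_sum_one (hn : 2 ≤ n) (i : Fin n) : ∑ x ∈ Finset.range (2 * n ^ 3 + 1), d n q i x = 1 := by
  have hM := M_pos (n := n) hn
  unfold d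
  rw [Finset.sum_comm]
  have h1 : ∀ e ∈ pairs n ×ˢ (Finset.univ : Finset Bool),
      ∑ x ∈ Finset.range (2 * n ^ 3 + 1),
        w n q e.1 e.2 i * (if x = pos n e.1 e.2 i then (1:ℝ) else 0) = w n q e.1 e.2 i := by
    intro e he
    have hp : e.1 ∈ pairs n := (Finset.mem_product.1 he).1
    rw [← Finset.mul_sum, Finset.sum_ite_eq' _ _ (fun _ => (1:ℝ)),
      if_pos (Finset.mem_range.2 (pos_lt hn hp e.2 i)), mul_one]
  rw [Finset.sum_congr rfl h1, Finset.sum_product]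
  have h2 : ∀ p ∈ pairs n, ∑ t : Bool, w n q p t i = 1 / (n.choose 2 : ℝ) := by
    intro p _
    rw [Fintype.sum_bool]
    exact sum_w_bool hn p i
  rw [Finset.sum_congr rfl h2, Finset.sum_const, card_pairs, nsmul_eq_mul]
  field_simp

lemma sum_point (N P1 P2 : ℕ) (h1 : P1 < N) (h2 : P2 < N) (c : ℝ) :
    ∑ α ∈ Finset.range N, ∑ β ∈ Finset.range N,
      (c * (if α = P1 then (1:ℝ) else 0) * (if β = P2 then (1:ℝ) else 0) *
        (if β < α then (1:ℝ) else 0))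
      = c * (if P2 < P1 then 1 else 0) := by
  rw [Finset.sum_eq_single P1]
  · rw [Finset.sum_eq_single P2]
    · simp
    · intro b _ hb; simp [hb]
    · intro h; exact absurd (Finset.mem_range.2 h2) h
  · intro a _ ha
    apply Finset.sum_eq_zero
    intro b _
    simp [ha]
  · intro h; exact absurd (Finset.mem_range.2 h1) h

lemma double_sum_atoms {ι κ : Type*} (N : ℕ) (A : Finset ι) (B : Finset κ)
    (wa : ι → ℝ) (pa : ι → ℕ) (wb : κ → ℝ) (pb : κ → ℕ)
    (ha : ∀ e ∈ A, pa e < N) (hb : ∀ e ∈ B, pb e < N) :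
    ∑ α ∈ Finset.range N, ∑ β ∈ Finset.range N,
      (if β < α then (∑ e ∈ A, wa e * (if α = pa e then (1:ℝ) else 0)) *
        (∑ f ∈ B, wb f * (if β = pb f then (1:ℝ) else 0)) else 0)
    = ∑ e ∈ A, ∑ f ∈ B, wa e * wb f * (if pb f < pa e then 1 else 0) := by
  have step : ∀ α β : ℕ,
      (if β < α then (∑ e ∈ A, wa e * (if α = pa e then (1:ℝ) else 0)) *
        (∑ f ∈ B, wb f * (if β = pb f then (1:ℝ) else 0)) else 0)
      = ∑ e ∈ A, ∑ f ∈ B, (wa e * wb f * (if α = pa e then (1:ℝ) else 0) *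
          (if β = pb f then (1:ℝ) else 0) * (if β < α then (1:ℝ) else 0)) := by
    intro α β
    split_ifs with h
    · rw [Finset.sum_mul_sum]
      refine Finset.sum_congr rfl fun e _ => Finset.sum_congr rfl fun f _ => ?_
      ring
    · symm
      apply Finset.sum_eq_zero
      intro e _
      apply Finset.sum_eq_zero
      intro f _
      simp [h]
  calc ∑ α ∈ Finset.range N, ∑ β ∈ Finset.range N,
      (if β < α then (∑ e ∈ A, wa e * (if α = pa e then (1:ℝ) else 0)) *
        (∑ f ∈ B, wb f * (if β = pb f then (1:ℝ) else 0)) else 0)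
      = ∑ α ∈ Finset.range N, ∑ β ∈ Finset.range N, ∑ e ∈ A, ∑ f ∈ B,
          (wa e * wb f * (if α = pa e then (1:ℝ) else 0) *
          (if β = pb f then (1:ℝ) else 0) * (if β < α then (1:ℝ) else 0)) :=
        Finset.sum_congr rfl fun α _ => Finset.sum_congr rfl fun β _ => step α β
    _ = ∑ α ∈ Finset.range N, ∑ e ∈ A, ∑ β ∈ Finset.range N, ∑ f ∈ B,
          (wa e * wb f * (if α = pa e then (1:ℝ) else 0) *
          (if β = pb f then (1:ℝ) else 0) * (if β < α then (1:ℝ) else 0)) :=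
        Finset.sum_congr rfl fun α _ => Finset.sum_comm
    _ = ∑ e ∈ A, ∑ α ∈ Finset.range N, ∑ β ∈ Finset.range N, ∑ f ∈ B,
          (wa e * wb f * (if α = pa e then (1:ℝ) else 0) *
          (if β = pb f then (1:ℝ) else 0) * (if β < α then (1:ℝ) else 0)) :=
        Finset.sum_comm
    _ = ∑ e ∈ A, ∑ α ∈ Finset.range N, ∑ f ∈ B, ∑ β ∈ Finset.range N,
          (wa e * wb f * (if α = pa e then (1:ℝ) else 0) *
          (if β = pb f then (1:ℝ) else 0) * (if β < α then (1:ℝ) else 0)) :=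
        Finset.sum_congr rfl fun e _ => Finset.sum_congr rfl fun α _ => Finset.sum_comm
    _ = ∑ e ∈ A, ∑ f ∈ B, ∑ α ∈ Finset.range N, ∑ β ∈ Finset.range N,
          (wa e * wb f * (if α = pa e then (1:ℝ) else 0) *
          (if β = pb f then (1:ℝ) else 0) * (if β < α then (1:ℝ) else 0)) :=
        Finset.sum_congr rfl fun e _ => Finset.sum_comm
    _ = ∑ e ∈ A, ∑ f ∈ B, wa e * wb f * (if pb f < pa e then (1:ℝ) else 0) :=
        Finset.sum_congr rfl fun e he => Finset.sum_congr rfl fun f hf =>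
          sum_point N (pa e) (pb f) (ha e he) (hb f hf) (wa e * wb f)

lemma pos_lt_pos_of_sec {p p' : Fin n × Fin n} (h : secIdx p' < secIdx p)
    (t t' : Bool) (i j : Fin n) : pos n p' t' j < pos n p t i := by
  unfold pos
  have h2 := off_lt (n := n) p' t' j
  calc secIdx p' * (2*n+4) + off n p' t' j < secIdx p' * (2*n+4) + (2*n+4) := by omega
    _ = (secIdx p' + 1) * (2*n+4) := by ring
    _ ≤ secIdx p * (2*n+4) := Nat.mul_le_mul_right _ h
    _ ≤ secIdx p * (2*n+4) + off n p t i := Nat.le_add_right _ _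

lemma pos_cmp_offdiag {p p' : Fin n × Fin n} (hne : secIdx p ≠ secIdx p')
    (t t' : Bool) (i j : Fin n) :
    (if pos n p' t' j < pos n p t i then (1:ℝ) else 0)
      = (if secIdx p' < secIdx p then 1 else 0) := by
  rcases lt_or_gt_of_ne hne with hlt | hgt
  · rw [if_neg (Nat.lt_asymm (pos_lt_pos_of_sec hlt t' t j i)),
      if_neg (by omega : ¬ secIdx p' < secIdx p)]
  · rw [if_pos (pos_lt_pos_of_sec hgt t t' i j), if_pos hgt]

lemma H_offdiag (hn : 2 ≤ n) {p p' : Fin n × Fin n} (hp : p ∈ pairs n)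
    (hp' : p' ∈ pairs n) (hne : p ≠ p') (i j : Fin n) :
    ∑ t : Bool, ∑ t' : Bool, w n q p t i * w n q p' t' j *
      (if pos n p' t' j < pos n p t i then (1:ℝ) else 0)
    = (if secIdx p' < secIdx p then 1/((n.choose 2:ℝ))^2 else 0) := by
  have hsec : secIdx p ≠ secIdx p' := fun h => hne (secIdx_inj hp hp' h)
  have hrw := pos_cmp_offdiag (n := n) hsec
  have e1 : w n q p true i + w n q p false i = 1/(n.choose 2:ℝ) := sum_w_bool hn p i
  have e2 : w n q p' true j + w n q p' false j = 1/(n.choose 2:ℝ) := sum_w_bool hn p' j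
  simp only [Fintype.sum_bool, hrw]
  split_ifs with hc
  · linear_combination (w n q p' true j + w n q p' false j) * e1 + (1/(n.choose 2:ℝ)) * e2
  · ring

lemma H_diag (hn : 2 ≤ n) {i j : Fin n} (hij : i < j) {p : Fin n × Fin n}
    (hp : p ∈ pairs n) :
    ∑ t : Bool, ∑ t' : Bool, w n q p t i * w n q p t' j *
      (if pos n p t' j < pos n p t i then (1:ℝ) else 0)
    = if p = (i, j) then (1/(n.choose 2:ℝ) - X n q i j)/(n.choose 2:ℝ)
      else 1/(2*((n.choose 2:ℝ))^2) := by
  have hM := M_pos (n := n) hn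
  have hMne : ((n.choose 2 : ℕ) : ℝ) ≠ 0 := ne_of_gt hM
  obtain ⟨a, b⟩ := p
  have hab : (a:ℕ) < (b:ℕ) := mem_pairs.1 hp
  have hij' : (i:ℕ) < (j:ℕ) := hij
  have hi := i.isLt
  have hj := j.isLt
  have ha := a.isLt
  have hb := b.isLt
  have hcmp : ∀ t t' : Bool, (if pos n (a,b) t' j < pos n (a,b) t i then (1:ℝ) else 0)
      = (if off n (a,b) t' j < off n (a,b) t i then (1:ℝ) else 0) := by
    intro t t'
    simp only [pos]
    by_cases hc : off n (a,b) t' j < off n (a,b) t i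
    · exact (if_pos (Nat.add_lt_add_left hc _)).trans (if_pos hc).symm
    · exact (if_neg (fun h => hc (Nat.lt_of_add_lt_add_left h))).trans (if_neg hc).symm
  simp only [Fintype.sum_bool, hcmp]
  by_cases h1 : i = a
  · by_cases h2 : j = b
    · rw [if_pos (show ((a,b) : Fin n × Fin n) = (i,j) by rw [h1, h2])]
      subst h1; subst h2
      simp only [w, off]
      simp [ne_of_gt hij]
      first
        | (split_ifs <;> (first | ring1 | (exfalso; omega)))
        | ring1
        | (exfalso; omega)
    · have hja : j ≠ a := by rw [← h1]; exact (ne_of_gt hij)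
      have hjb' : (j:ℕ) ≠ (b:ℕ) := by simpa [Fin.ext_iff] using h2
      rw [if_neg (show ¬ ((a,b) : Fin n × Fin n) = (i,j) from fun h => by rw [Prod.mk.injEq] at h; exact h2 h.2.symm)]
      subst h1
      simp [w, off, hja, h2]
      first
        | (split_ifs <;> (first | ring1 | (exfalso; omega)))
        | ring1
        | (exfalso; omega)
  · have hia' : (i:ℕ) ≠ (a:ℕ) := by simpa [Fin.ext_iff] using h1
    by_cases h3 : i = b
    · have hja : j ≠ a := Fin.ne_of_val_ne (by omega)
      have hjb : j ≠ b := Fin.ne_of_val_ne (by omega)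
      rw [if_neg (show ¬ ((a,b) : Fin n × Fin n) = (i,j) from fun h => by rw [Prod.mk.injEq] at h; exact h1 h.1.symm)]
      subst h3
      simp [w, off, h1, hja, hjb]
      first
        | (split_ifs <;> (first | ring1 | (exfalso; omega)))
        | ring1
        | (exfalso; omega)
    · have hib' : (i:ℕ) ≠ (b:ℕ) := by simpa [Fin.ext_iff] using h3
      rw [if_neg (show ¬ ((a,b) : Fin n × Fin n) = (i,j) from fun h => by rw [Prod.mk.injEq] at h; exact h1 h.1.symm)]
      by_cases h4 : j = a
      · have hjb : j ≠ b := Fin.ne_of_val_ne (by omega)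
        subst h4
        simp [w, off, h1, h3]
        first
        | (split_ifs <;> (first | ring1 | (exfalso; omega)))
        | ring1
        | (exfalso; omega)
      · have hja' : (j:ℕ) ≠ (a:ℕ) := by simpa [Fin.ext_iff] using h4
        by_cases h5 : j = b
        · subst h5
          simp [w, off, h1, h3, h4]
          first
        | (split_ifs <;> (first | ring1 | (exfalso; omega)))
        | ring1
        | (exfalso; omega)
        · have hjb' : (j:ℕ) ≠ (b:ℕ) := by simpa [Fin.ext_iff] using h5
          simp [w, off, h1, h3, h4, h5]
          first
        | (split_ifs <;> (first | ring1 | (exfalso; omega)))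
        | ring1
        | (exfalso; omega)

lemma count_lt (hn : 2 ≤ n) :
    ∑ p ∈ pairs n, ∑ p' ∈ pairs n, (if secIdx p' < secIdx p then (1:ℝ) else 0)
    = (((n.choose 2 : ℕ):ℝ)^2 - ((n.choose 2 : ℕ):ℝ))/2 := by
  have key : ∀ p ∈ pairs n, ∀ p' ∈ pairs n,
      (if secIdx p' < secIdx p then (1:ℝ) else 0)
      + (if secIdx p < secIdx p' then (1:ℝ) else 0)
      + (if p' = p then (1:ℝ) else 0) = 1 := by
    intro p hp p' hp'
    by_cases hpe : p' = p
    · subst hpe; simp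
    · have hne : secIdx p ≠ secIdx p' := fun h => hpe (secIdx_inj hp' hp h.symm)
      rw [if_neg hpe]
      rcases lt_or_gt_of_ne hne with h | h
      · rw [if_neg (by omega), if_pos h]; ring
      · rw [if_pos h, if_neg (by omega)]; ring
  have sum1 : ∑ p ∈ pairs n, ∑ p' ∈ pairs n,
      ((if secIdx p' < secIdx p then (1:ℝ) else 0)
      + (if secIdx p < secIdx p' then (1:ℝ) else 0)
      + (if p' = p then (1:ℝ) else 0)) = ((n.choose 2 : ℕ):ℝ)^2 := by
    rw [Finset.sum_congr rfl (fun p hp => Finset.sum_congr rfl (fun p' hp' => key p hp p' hp'))]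
    simp only [Finset.sum_const, card_pairs, nsmul_eq_mul, mul_one]
    ring
  have heq : ∑ p ∈ pairs n, ∑ p' ∈ pairs n, (if p' = p then (1:ℝ) else 0)
      = ((n.choose 2 : ℕ):ℝ) := by
    have : ∀ p ∈ pairs n, ∑ p' ∈ pairs n, (if p' = p then (1:ℝ) else 0) = 1 := by
      intro p hp
      rw [Finset.sum_ite_eq' (pairs n) p (fun _ => (1:ℝ)), if_pos hp]
    rw [Finset.sum_congr rfl this, Finset.sum_const, card_pairs, nsmul_eq_mul, mul_one]
  have hswap : ∑ p ∈ pairs n, ∑ p' ∈ pairs n, (if secIdx p < secIdx p' then (1:ℝ) else 0)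
      = ∑ p ∈ pairs n, ∑ p' ∈ pairs n, (if secIdx p' < secIdx p then (1:ℝ) else 0) :=
    Finset.sum_comm
  have expand : ∑ p ∈ pairs n, ∑ p' ∈ pairs n,
      ((if secIdx p' < secIdx p then (1:ℝ) else 0)
      + (if secIdx p < secIdx p' then (1:ℝ) else 0)
      + (if p' = p then (1:ℝ) else 0))
      = ∑ p ∈ pairs n, ∑ p' ∈ pairs n, (if secIdx p' < secIdx p then (1:ℝ) else 0)
      + ∑ p ∈ pairs n, ∑ p' ∈ pairs n, (if secIdx p < secIdx p' then (1:ℝ) else 0)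
      + ∑ p ∈ pairs n, ∑ p' ∈ pairs n, (if p' = p then (1:ℝ) else 0) := by
    rw [← Finset.sum_add_distrib, ← Finset.sum_add_distrib]
    refine Finset.sum_congr rfl fun p _ => ?_
    rw [← Finset.sum_add_distrib, ← Finset.sum_add_distrib]
  rw [expand, hswap, heq] at sum1
  linarith

lemma main_sum (hn : 2 ≤ n) (hq : ∀ i j : Fin n, i < j →
      |q i j - 1 / 2| ≤ 1 / (2 * ((n.choose 2 : ℝ)) ^ 2)) {i j : Fin n} (hij : i < j) :
    ∑ α ∈ Finset.range (2 * n ^ 3 + 1), ∑ β ∈ Finset.range (2 * n ^ 3 + 1),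
      (if β < α then d n q i α * d n q j β else 0) = q i j := by
  have hM := M_pos (n := n) hn
  have hMne : ((n.choose 2 : ℕ) : ℝ) ≠ 0 := ne_of_gt hM
  have step1 : ∑ α ∈ Finset.range (2 * n ^ 3 + 1), ∑ β ∈ Finset.range (2 * n ^ 3 + 1),
      (if β < α then d n q i α * d n q j β else 0)
      = ∑ e ∈ pairs n ×ˢ (Finset.univ : Finset Bool),
          ∑ f ∈ pairs n ×ˢ (Finset.univ : Finset Bool),
          w n q e.1 e.2 i * w n q f.1 f.2 j *
            (if pos n f.1 f.2 j < pos n e.1 e.2 i then 1 else 0) := by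
    unfold d
    exact double_sum_atoms (2 * n ^ 3 + 1) _ _ _ _ _ _
      (fun e he => pos_lt hn (Finset.mem_product.1 he).1 e.2 i)
      (fun f hf => pos_lt hn (Finset.mem_product.1 hf).1 f.2 j)
  have step2 : ∑ e ∈ pairs n ×ˢ (Finset.univ : Finset Bool),
          ∑ f ∈ pairs n ×ˢ (Finset.univ : Finset Bool),
          w n q e.1 e.2 i * w n q f.1 f.2 j *
            (if pos n f.1 f.2 j < pos n e.1 e.2 i then 1 else 0)
      = ∑ p ∈ pairs n, ∑ p' ∈ pairs n, ∑ t : Bool, ∑ t' : Bool,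
          w n q p t i * w n q p' t' j *
            (if pos n p' t' j < pos n p t i then 1 else 0) := by
    rw [Finset.sum_product]
    refine Finset.sum_congr rfl fun p _ => ?_
    calc ∑ t : Bool, ∑ f ∈ pairs n ×ˢ (Finset.univ : Finset Bool),
          w n q p t i * w n q f.1 f.2 j * (if pos n f.1 f.2 j < pos n p t i then (1:ℝ) else 0)
        = ∑ f ∈ pairs n ×ˢ (Finset.univ : Finset Bool), ∑ t : Bool,
          w n q p t i * w n q f.1 f.2 j *
            (if pos n f.1 f.2 j < pos n p t i then (1:ℝ) else 0) := Finset.sum_comm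
      _ = ∑ p' ∈ pairs n, ∑ t' : Bool, ∑ t : Bool,
          w n q p t i * w n q p' t' j *
            (if pos n p' t' j < pos n p t i then (1:ℝ) else 0) := by rw [Finset.sum_product]
      _ = ∑ p' ∈ pairs n, ∑ t : Bool, ∑ t' : Bool,
          w n q p t i * w n q p' t' j *
            (if pos n p' t' j < pos n p t i then (1:ℝ) else 0) :=
          Finset.sum_congr rfl fun p' _ => Finset.sum_comm
  have step3 : ∀ p ∈ pairs n, ∀ p' ∈ pairs n,
      (∑ t : Bool, ∑ t' : Bool, w n q p t i * w n q p' t' j *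
        (if pos n p' t' j < pos n p t i then (1:ℝ) else 0))
      = (1/((n.choose 2:ℝ))^2) * (if secIdx p' < secIdx p then (1:ℝ) else 0)
        + (if p' = p then (if p = (i, j) then (1/(n.choose 2:ℝ) - X n q i j)/(n.choose 2:ℝ)
            else 1/(2*((n.choose 2:ℝ))^2)) else 0) := by
    intro p hp p' hp'
    by_cases hpe : p' = p
    · subst hpe
      rw [H_diag hn hij hp', if_pos rfl, if_neg (lt_irrefl _), mul_zero, zero_add]
    · rw [H_offdiag hn hp hp' (fun h => hpe h.symm) i j, if_neg hpe, add_zero]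
      split_ifs
      · ring
      · ring
  have part1 : ∑ p ∈ pairs n, ∑ p' ∈ pairs n,
      ((1/((n.choose 2:ℝ))^2) * (if secIdx p' < secIdx p then (1:ℝ) else 0))
      = (1/((n.choose 2:ℝ))^2) * ((((n.choose 2 : ℕ):ℝ)^2 - ((n.choose 2 : ℕ):ℝ))/2) := by
    rw [← count_lt hn, Finset.mul_sum]
    exact Finset.sum_congr rfl fun p _ => (Finset.mul_sum _ _ _).symm
  have part2 : ∑ p ∈ pairs n, ∑ p' ∈ pairs n,
      (if p' = p then (if p = (i, j) then (1/(n.choose 2:ℝ) - X n q i j)/(n.choose 2:ℝ)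
            else 1/(2*((n.choose 2:ℝ))^2)) else 0)
      = ((n.choose 2 : ℕ):ℝ) * (1/(2*((n.choose 2:ℝ))^2))
        + ((1/(n.choose 2:ℝ) - X n q i j)/(n.choose 2:ℝ) - 1/(2*((n.choose 2:ℝ))^2)) := by
    have inner : ∀ p ∈ pairs n, ∑ p' ∈ pairs n,
        (if p' = p then (if p = (i, j) then (1/(n.choose 2:ℝ) - X n q i j)/(n.choose 2:ℝ)
            else 1/(2*((n.choose 2:ℝ))^2)) else 0)
        = (if p = (i, j) then (1/(n.choose 2:ℝ) - X n q i j)/(n.choose 2:ℝ)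
            else 1/(2*((n.choose 2:ℝ))^2)) := by
      intro p hp
      rw [Finset.sum_ite_eq' (pairs n) p _, if_pos hp]
    rw [Finset.sum_congr rfl inner]
    have point : ∀ p : Fin n × Fin n,
        (if p = (i, j) then (1/(n.choose 2:ℝ) - X n q i j)/(n.choose 2:ℝ)
            else 1/(2*((n.choose 2:ℝ))^2))
        = 1/(2*((n.choose 2:ℝ))^2)
          + (if p = (i, j) then ((1/(n.choose 2:ℝ) - X n q i j)/(n.choose 2:ℝ)
              - 1/(2*((n.choose 2:ℝ))^2)) else 0) := by
      intro p
      split_ifs <;> ring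
    rw [Finset.sum_congr rfl (fun p _ => point p), Finset.sum_add_distrib,
      Finset.sum_const, card_pairs, nsmul_eq_mul,
      Finset.sum_ite_eq' (pairs n) (i, j) _, if_pos (mem_pairs.2 hij)]
  rw [step1, step2,
    Finset.sum_congr rfl (fun p hp => Finset.sum_congr rfl (fun p' hp' => step3 p hp p' hp')),
    Finset.sum_congr rfl (fun p (_ : p ∈ pairs n) => Finset.sum_add_distrib),
    Finset.sum_add_distrib, part1, part2]
  unfold X
  field_simp
  ring

end main




end PWR

theorem pairwise_winning_probabilities_realizable (n : ℕ) (hn : 2 ≤ n)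
    (q : Fin n → Fin n → ℝ)
    (hq : ∀ i j : Fin n, i < j →
      |q i j - 1 / 2| ≤ 1 / (2 * ((n.choose 2 : ℝ)) ^ 2)) :
    ∃ d : Fin n → ℕ → ℝ,
      (∀ i x, 0 ≤ d i x) ∧
      (∀ i, ∀ x, x ∉ Finset.range (2 * n ^ 3 + 1) → d i x = 0) ∧
      (∀ i, ∑ x ∈ Finset.range (2 * n ^ 3 + 1), d i x = 1) ∧
      (∀ i j : Fin n, i < j →
        ∑ α ∈ Finset.range (2 * n ^ 3 + 1), ∑ β ∈ Finset.range (2 * n ^ 3 + 1),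
          (if β < α then d i α * d j β else 0) = q i j) := by
  exact ⟨PWR.d n q, fun i x => PWR.d_nonneg hn hq i x,
    fun i x hx => PWR.d_support hn i x hx,
    fun i => PWR.d_sum_one hn i,
    fun i j hij => PWR.main_sum hn hq hij⟩
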